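/- Let k be a field and let t_1,…,t_r be nonnegative integers with t_1+⋯+t_r = m+1. Then J_m ⊆ P(m;t_1,…,t_r); that is, every generator g_k (0 ≤ k ≤ m) lies in the ideal generated by the variables x_i^(j) with 1 ≤ i ≤ r and 0 ≤ j ≤ t_i − 1. -/

import Mathlib

/-- The polynomial ring `R = k[x_i^(j) : 1 ≤ i ≤ n, 0 ≤ j ≤ m]` in `n(m+1)` variables;
the variable `x_i^(j)` is `MvPolynomial.X (i, j)`. -/
abbrev JetRing (k : Type*) [Field k] (m n : ℕ) : Type _ :=
  MvPolynomial (Fin n × Fin (m + 1)) k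

/-- `jetGen k m n r hrn j` is the generator `g_j`, i.e. the coefficient of `t^j` in the
product `∏_{i=1}^{r} (x_i^(0) + x_i^(1) t + ⋯ + x_i^(m) t^m)`. -/
noncomputable def jetGen (k : Type*) [Field k] (m n r : ℕ) (hrn : r ≤ n) (j : ℕ) :
    JetRing k m n :=
  Polynomial.coeff
    (∏ i : Fin r, ∑ l : Fin (m + 1),
      Polynomial.C (MvPolynomial.X (Fin.castLE hrn i, l)) * Polynomial.X ^ (l : ℕ)) j

/-- The ideal `J_m = (g_0, …, g_m)` defining the `m`-th jet scheme of `x_1 ⋯ x_r = 0`. -/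
noncomputable def jetIdeal (k : Type*) [Field k] (m n r : ℕ) (hrn : r ≤ n) :
    Ideal (JetRing k m n) :=
  Ideal.span (jetGen k m n r hrn '' Set.Iic m)

/-- The ideal `P(m; t_1, …, t_r) = (x_i^(j) : 1 ≤ i ≤ r, 0 ≤ j ≤ t_i - 1)`. -/
noncomputable def compPrime (k : Type*) [Field k] (m n r : ℕ) (hrn : r ≤ n)
    (t : Fin r → ℕ) : Ideal (JetRing k m n) :=
  Ideal.span {p | ∃ (i : Fin r) (j : Fin (m + 1)), (j : ℕ) < t i ∧
    p = MvPolynomial.X (Fin.castLE hrn i, j)}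

/-- The length of a module, valued in `ℕ∞`: the supremum of lengths of strictly
increasing chains of submodules. -/
noncomputable def moduleLength (R M : Type*) [Ring R] [AddCommGroup M] [Module R M] : ℕ∞ :=
  Order.height (⊤ : Submodule R M)


private lemma jetGen_mem_compPrime
    (k : Type*) [Field k]
    (m n r : ℕ) (hrn : r ≤ n)
    (t : Fin r → ℕ) (hsum : ∑ i, t i = m + 1) (j : ℕ) (hj : j ≤ m) :
    jetGen k m n r hrn j ∈ compPrime k m n r hrn t := by
  have hcast : jetGen k m n r hrn j =
      PowerSeries.coeff j ((∏ i : Fin r, ∑ l : Fin (m + 1),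
        Polynomial.C (MvPolynomial.X (Fin.castLE hrn i, l)) * Polynomial.X ^ (l : ℕ) :
        Polynomial (JetRing k m n)) : PowerSeries (JetRing k m n)) := by
    rw [Polynomial.coeff_coe]; rfl
  have hprod : ((∏ i : Fin r, ∑ l : Fin (m + 1),
      Polynomial.C (MvPolynomial.X (Fin.castLE hrn i, l)) * Polynomial.X ^ (l : ℕ) :
      Polynomial (JetRing k m n)) : PowerSeries (JetRing k m n)) =
      ∏ i : Fin r, ((∑ l : Fin (m + 1),
        Polynomial.C (MvPolynomial.X (Fin.castLE hrn i, l)) * Polynomial.X ^ (l : ℕ) :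
        Polynomial (JetRing k m n)) : PowerSeries (JetRing k m n)) := by
    simp only [← Polynomial.coeToPowerSeries.ringHom_apply, map_prod]
  rw [hcast, hprod, PowerSeries.coeff_prod]
  apply Ideal.sum_mem
  intro μ hμ
  rw [Finset.mem_finsuppAntidiag] at hμ
  obtain ⟨hsumμ, -⟩ := hμ
  have hex : ∃ i : Fin r, μ i < t i := by
    by_contra h
    push_neg at h
    have h1 : ∑ i, t i ≤ ∑ i, μ i := Finset.sum_le_sum fun i _ => h i
    rw [hsumμ, hsum] at h1
    omega
  obtain ⟨i, hi⟩ := hex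
  have hμi : μ i ≤ m := by
    have h2 : μ i ≤ ∑ x, μ x := Finset.single_le_sum (fun _ _ => Nat.zero_le _) (Finset.mem_univ i)
    rw [hsumμ] at h2
    omega
  have hlt : μ i < m + 1 := Nat.lt_succ_of_le hμi
  have hcoeff : PowerSeries.coeff (R := JetRing k m n) (μ i)
      ((∑ l : Fin (m + 1), Polynomial.C (MvPolynomial.X (Fin.castLE hrn i, l)) *
        Polynomial.X ^ (l : ℕ) : Polynomial (JetRing k m n)) : PowerSeries (JetRing k m n))
      = MvPolynomial.X (Fin.castLE hrn i, ⟨μ i, hlt⟩) := by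
    rw [Polynomial.coeff_coe, Polynomial.finset_sum_coeff,
      Finset.sum_eq_single (⟨μ i, hlt⟩ : Fin (m + 1))]
    · simp
    · intro l _ hne
      simp only [Polynomial.coeff_C_mul, Polynomial.coeff_X_pow]
      rw [if_neg, mul_zero]
      intro h
      exact hne (Fin.ext h.symm)
    · simp
  rw [← Finset.mul_prod_erase Finset.univ _ (Finset.mem_univ i), hcoeff]
  exact Ideal.mul_mem_right _ _ (Ideal.subset_span ⟨i, ⟨μ i, hlt⟩, hi, rfl⟩)

/-- If `t_1, …, t_r` are nonnegative integers with `t_1 + ⋯ + t_r = m + 1`, then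
`J_m ⊆ P(m; t_1, …, t_r)`: every generator `g_k` (`0 ≤ k ≤ m`) lies in the ideal
generated by the variables `x_i^(j)` with `1 ≤ i ≤ r`, `0 ≤ j ≤ t_i - 1`. -/
theorem jetIdeal_le_compPrime
    (k : Type*) [Field k]
    (m n r : ℕ) (hr : 1 ≤ r) (hrn : r ≤ n)
    (t : Fin r → ℕ) (hsum : ∑ i, t i = m + 1) :
    jetIdeal k m n r hrn ≤ compPrime k m n r hrn t := by
  rw [jetIdeal, Ideal.span_le]
  rintro p ⟨j, hj, rfl⟩
  exact jetGen_mem_compPrime k m n r hrn t hsum j hj
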